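/- arXiv:1303.3173 — 2 statements merged into one kernel-verified Lean document; each statement's English description precedes it below -/
import Mathlib

section
/- Let R be a commutative local ring. Then for every power series s ∈ xR[[x]] (i.e., every s ∈ R[[x]] with zero constant term), the generalized matrix ring K_s(R[[x]]) is quasipolar. -/
/-- The generalized matrix ring `K_s(R)` with multiplier `s`. -/
@[ext]
structure GenMatrix (R : Type*) (s : R) where
  a : R
  b : R
  c : R
  d : R

namespace GenMatrix

variable {R : Type*} [Ring R] {s : R}

instance : Add (GenMatrix R s) :=
  ⟨fun X Y => ⟨X.a + Y.a, X.b + Y.b, X.c + Y.c, X.d + Y.d⟩⟩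
instance : Neg (GenMatrix R s) := ⟨fun X => ⟨-X.a, -X.b, -X.c, -X.d⟩⟩
instance : Zero (GenMatrix R s) := ⟨⟨0, 0, 0, 0⟩⟩
instance : One (GenMatrix R s) := ⟨⟨1, 0, 0, 1⟩⟩
instance : Mul (GenMatrix R s) :=
  ⟨fun X Y => ⟨X.a * Y.a + s * (X.b * Y.c), X.a * Y.b + X.b * Y.d,
    X.c * Y.a + X.d * Y.c, s * (X.c * Y.b) + X.d * Y.d⟩⟩

@[simp] lemma add_a (X Y : GenMatrix R s) : (X + Y).a = X.a + Y.a := rfl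
@[simp] lemma add_b (X Y : GenMatrix R s) : (X + Y).b = X.b + Y.b := rfl
@[simp] lemma add_c (X Y : GenMatrix R s) : (X + Y).c = X.c + Y.c := rfl
@[simp] lemma add_d (X Y : GenMatrix R s) : (X + Y).d = X.d + Y.d := rfl
@[simp] lemma neg_a (X : GenMatrix R s) : (-X).a = -X.a := rfl
@[simp] lemma neg_b (X : GenMatrix R s) : (-X).b = -X.b := rfl
@[simp] lemma neg_c (X : GenMatrix R s) : (-X).c = -X.c := rfl
@[simp] lemma neg_d (X : GenMatrix R s) : (-X).d = -X.d := rfl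
@[simp] lemma zero_a : (0 : GenMatrix R s).a = 0 := rfl
@[simp] lemma zero_b : (0 : GenMatrix R s).b = 0 := rfl
@[simp] lemma zero_c : (0 : GenMatrix R s).c = 0 := rfl
@[simp] lemma zero_d : (0 : GenMatrix R s).d = 0 := rfl
@[simp] lemma one_a : (1 : GenMatrix R s).a = 1 := rfl
@[simp] lemma one_b : (1 : GenMatrix R s).b = 0 := rfl
@[simp] lemma one_c : (1 : GenMatrix R s).c = 0 := rfl
@[simp] lemma one_d : (1 : GenMatrix R s).d = 1 := rfl
@[simp] lemma mul_a (X Y : GenMatrix R s) : (X * Y).a = X.a * Y.a + s * (X.b * Y.c) := rfl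
@[simp] lemma mul_b (X Y : GenMatrix R s) : (X * Y).b = X.a * Y.b + X.b * Y.d := rfl
@[simp] lemma mul_c (X Y : GenMatrix R s) : (X * Y).c = X.c * Y.a + X.d * Y.c := rfl
@[simp] lemma mul_d (X Y : GenMatrix R s) : (X * Y).d = s * (X.c * Y.b) + X.d * Y.d := rfl

instance : AddCommGroup (GenMatrix R s) where
  add_assoc X Y Z := by ext <;> simp [add_assoc]
  zero_add X := by ext <;> simp
  add_zero X := by ext <;> simp
  add_comm X Y := by ext <;> simp [add_comm]
  neg_add_cancel X := by ext <;> simp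
  nsmul := nsmulRec
  zsmul := zsmulRec

section Central

variable [Fact (s ∈ Set.center R)]

lemma scomm (r : R) : r * s = s * r := Semigroup.mem_center_iff.mp Fact.out r

lemma sshift (r t : R) : r * (s * t) = s * (r * t) := by
  rw [← mul_assoc, scomm (s := s), mul_assoc]

instance : Ring (GenMatrix R s) where
  __ := (inferInstance : AddCommGroup (GenMatrix R s))
  left_distrib X Y Z := by ext <;> simp [mul_add, add_mul] <;> abel
  right_distrib X Y Z := by ext <;> simp [mul_add, add_mul] <;> abel
  zero_mul X := by ext <;> simp
  mul_zero X := by ext <;> simp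
  mul_assoc X Y Z := by
    ext <;> simp only [mul_a, mul_b, mul_c, mul_d, mul_add, add_mul, mul_assoc, sshift] <;> abel
  one_mul X := by ext <;> simp
  mul_one X := by ext <;> simp

end Central

instance central_of_comm {R : Type*} [CommRing R] (s : R) : Fact (s ∈ Set.center R) :=
  ⟨by rw [Set.center_eq_univ]; trivial⟩

/-- `det_s` of a generalized matrix over a commutative ring. -/
def dets {R : Type*} {s : R} [CommRing R] (A : GenMatrix R s) : R :=
  A.a * A.d - s * (A.b * A.c)

/-- The trace of a generalized matrix. -/
def tr {R : Type*} {s : R} [Ring R] (A : GenMatrix R s) : R := A.a + A.d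

end GenMatrix

/-- An element `a` is quasinilpotent if `1 + a*x` is a unit for every `x` commuting with `a`. -/
def IsQuasinilpotent {R : Type*} [Ring R] (a : R) : Prop :=
  ∀ x : R, a * x = x * a → IsUnit (1 + a * x)

/-- An element `a` is quasipolar if there is an idempotent `p` in the double commutant of `a`
with `a + p` a unit and `a * p` quasinilpotent. -/
def IsQuasipolar {R : Type*} [Ring R] (a : R) : Prop :=
  ∃ p : R, IsIdempotentElem p ∧ (∀ y : R, y * a = a * y → p * y = y * p) ∧
    IsUnit (a + p) ∧ IsQuasinilpotent (a * p)

/-- A ring is quasipolar if every element is quasipolar. -/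
def IsQuasipolarRing (R : Type*) [Ring R] : Prop := ∀ a : R, IsQuasipolar a

/-- An element is strongly clean if it is the sum of an idempotent and a unit that commute. -/
def IsStronglyClean {R : Type*} [Ring R] (a : R) : Prop :=
  ∃ e u : R, IsIdempotentElem e ∧ IsUnit u ∧ a = e + u ∧ e * u = u * e

/-- A ring is strongly clean if every element is strongly clean. -/
def IsStronglyCleanRing (R : Type*) [Ring R] : Prop := ∀ a : R, IsStronglyClean a

/-- `a` is similar to `b` if `b = u⁻¹ * a * u` for some unit `u`. -/
def IsSimilar {R : Type*} [Ring R] (a b : R) : Prop :=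
  ∃ u : Rˣ, b = ↑u⁻¹ * a * ↑u

/-- The Jacobson radical of a ring: the intersection of all maximal left ideals. -/
def JacobsonRadical (R : Type*) [Ring R] : Ideal R := Ideal.jacobson ⊥



/-! ### Auxiliary material -/

section LocalHelpers

variable {S : Type*} [CommRing S] [IsLocalRing S]

lemma aux_nonunit_mul {a : S} (ha : ¬IsUnit a) (x : S) : ¬IsUnit (a * x) :=
  fun h => ha (isUnit_of_mul_isUnit_left h)

lemma aux_unit_add {u n : S} (hu : IsUnit u) (hn : ¬IsUnit n) : IsUnit (u + n) := by
  by_contra h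
  have h1 : u + n ∈ IsLocalRing.maximalIdeal S := by
    rwa [IsLocalRing.mem_maximalIdeal, mem_nonunits_iff]
  have h2 : n ∈ IsLocalRing.maximalIdeal S := by
    rwa [IsLocalRing.mem_maximalIdeal, mem_nonunits_iff]
  have : u ∈ IsLocalRing.maximalIdeal S := by
    have := Submodule.sub_mem _ h1 h2
    simpa using this
  rw [IsLocalRing.mem_maximalIdeal, mem_nonunits_iff] at this
  exact this hu

lemma aux_nonunit_add {a b : S} (ha : ¬IsUnit a) (hb : ¬IsUnit b) : ¬IsUnit (a + b) := by
  intro h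
  have h1 : a ∈ IsLocalRing.maximalIdeal S := by
    rwa [IsLocalRing.mem_maximalIdeal, mem_nonunits_iff]
  have h2 : b ∈ IsLocalRing.maximalIdeal S := by
    rwa [IsLocalRing.mem_maximalIdeal, mem_nonunits_iff]
  have := Submodule.add_mem _ h1 h2
  rw [IsLocalRing.mem_maximalIdeal, mem_nonunits_iff] at this
  exact this h

lemma aux_nonunit_neg {a : S} (ha : ¬IsUnit a) : ¬IsUnit (-a) := by
  intro h; exact ha (by simpa using h.neg)

end LocalHelpers

namespace GenMatrix

variable {S : Type*} [CommRing S] {s : S}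

/-- Scalar matrices. -/
def scl (r : S) : GenMatrix S s := ⟨r, 0, 0, r⟩

@[simp] lemma scl_a (r : S) : (scl (s := s) r).a = r := rfl
@[simp] lemma scl_b (r : S) : (scl (s := s) r).b = 0 := rfl
@[simp] lemma scl_c (r : S) : (scl (s := s) r).c = 0 := rfl
@[simp] lemma scl_d (r : S) : (scl (s := s) r).d = r := rfl

@[simp] lemma sub_a' (X Y : GenMatrix S s) : (X - Y).a = X.a - Y.a := by
  rw [sub_eq_add_neg, add_a, neg_a, ← sub_eq_add_neg]
@[simp] lemma sub_b' (X Y : GenMatrix S s) : (X - Y).b = X.b - Y.b := by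
  rw [sub_eq_add_neg, add_b, neg_b, ← sub_eq_add_neg]
@[simp] lemma sub_c' (X Y : GenMatrix S s) : (X - Y).c = X.c - Y.c := by
  rw [sub_eq_add_neg, add_c, neg_c, ← sub_eq_add_neg]
@[simp] lemma sub_d' (X Y : GenMatrix S s) : (X - Y).d = X.d - Y.d := by
  rw [sub_eq_add_neg, add_d, neg_d, ← sub_eq_add_neg]

lemma scl_zero : (scl 0 : GenMatrix S s) = 0 := by ext <;> simp
lemma scl_one : (scl 1 : GenMatrix S s) = 1 := by ext <;> simp

lemma scl_mul_scl (r t : S) : (scl r : GenMatrix S s) * scl t = scl (r * t) := by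
  ext <;> simp

lemma scl_comm (r : S) (X : GenMatrix S s) : scl r * X = X * scl r := by
  ext <;> simp [mul_comm]

lemma scl_left_comm (r : S) (X Y : GenMatrix S s) :
    X * (scl r * Y) = scl r * (X * Y) := by
  rw [← mul_assoc, ← scl_comm, mul_assoc]

/-- If `dets A` is a unit, then `A` is a unit. -/
lemma isUnit_of_isUnit_dets {A : GenMatrix S s} (h : IsUnit (dets A)) : IsUnit A := by
  obtain ⟨v, key⟩ : ∃ v : S, v * (A.a * A.d - s * (A.b * A.c)) = 1 := by
    obtain ⟨u, hu⟩ := h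
    refine ⟨((u⁻¹ : Sˣ) : S), ?_⟩
    have h2 := u.inv_mul
    rw [hu] at h2
    exact h2
  refine ⟨⟨A, ⟨v * A.d, -(v * A.b), -(v * A.c), v * A.a⟩, ?_, ?_⟩, rfl⟩ <;>
    ext <;> simp <;> first | linear_combination key | ring

/-- Cayley-Hamilton for generalized 2x2 matrices. -/
lemma cayley_hamilton (A : GenMatrix S s) :
    A * A + scl (dets A) = scl (tr A) * A := by
  ext <;> simp [dets, tr] <;> ring

section Local

variable [IsLocalRing S]

lemma isUnit_one_add_of_nonunits {M : GenMatrix S s} (hs : ¬IsUnit s)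
    (ha : ¬IsUnit M.a) (hd : ¬IsUnit M.d) : IsUnit (1 + M) := by
  apply isUnit_of_isUnit_dets
  have : dets (1 + M) = (1 + M.a) * (1 + M.d) + -(s * (M.b * M.c)) := by
    simp [dets]; ring
  rw [this]
  exact aux_unit_add
    ((aux_unit_add isUnit_one ha).mul (aux_unit_add isUnit_one hd))
    (aux_nonunit_neg (aux_nonunit_mul hs _))

lemma nonunit_entries_mul {A : GenMatrix S s} (hs : ¬IsUnit s)
    (ha : ¬IsUnit A.a) (hd : ¬IsUnit A.d) (X : GenMatrix S s) :
    ¬IsUnit ((A * X).a) ∧ ¬IsUnit ((A * X).d) := by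
  constructor
  · simp only [mul_a]
    exact aux_nonunit_add (by simpa [mul_assoc] using aux_nonunit_mul ha X.a)
      (aux_nonunit_mul hs _)
  · simp only [mul_d]
    exact aux_nonunit_add (aux_nonunit_mul hs _)
      (by simpa [mul_assoc] using aux_nonunit_mul hd X.d)

lemma isUnit_one_add_scl_mul {β : S} (hβ : ¬IsUnit β) (Y : GenMatrix S s) :
    IsUnit (1 + scl β * Y) := by
  apply isUnit_of_isUnit_dets
  have : dets (1 + scl β * Y) =
      (1 + β * Y.a) * (1 + β * Y.d) + β * (-(s * (β * (Y.b * Y.c)))) := by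
    simp [dets]; ring
  rw [this]
  exact aux_unit_add
    ((aux_unit_add isUnit_one (aux_nonunit_mul hβ _)).mul
      (aux_unit_add isUnit_one (aux_nonunit_mul hβ _)))
    (aux_nonunit_mul hβ _)

/-- The key abstract lemma: a generalized matrix whose characteristic polynomial
splits with one unit root and one non-unit root is quasipolar. -/
lemma isQuasipolar_of_roots (A : GenMatrix S s) (α β : S)
    (hα : IsUnit α) (hβ : ¬IsUnit β)
    (hsum : α + β = tr A) (hprod : α * β = dets A) : IsQuasipolar A := by
  -- β - α is a unit
  have hβα : IsUnit (β - α) := by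
    have h1 : IsUnit (α - β) := by
      rw [sub_eq_add_neg]; exact aux_unit_add hα (aux_nonunit_neg hβ)
    rw [show β - α = -(α - β) by ring]
    exact h1.neg
  obtain ⟨w, hw⟩ := hβα
  set v : S := ((w⁻¹ : Sˣ) : S) with hvdef
  have hv : v * (β - α) = 1 := by
    have := w.inv_mul; rw [hw] at this; exact this
  set B : GenMatrix S s := A - scl α with hB
  set p : GenMatrix S s := scl v * B with hp
  -- key identities
  have hsum' : α + β = A.a + A.d := hsum
  have hprod' : α * β = A.a * A.d - s * (A.b * A.c) := hprod
  have key : B * (A - scl β) = 0 := by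
    ext <;> simp [hB] <;>
      first
        | linear_combination (-A.a) * hsum' + hprod'
        | linear_combination (-A.b) * hsum'
        | linear_combination (-A.c) * hsum'
        | linear_combination (-A.d) * hsum' + hprod'
  have hBsplit : B = (A - scl β) + scl (β - α) := by
    ext <;> simp [hB] <;> ring
  have key2 : B * B = scl (β - α) * B := by
    calc B * B = B * ((A - scl β) + scl (β - α)) := by rw [← hBsplit]
      _ = B * (A - scl β) + B * scl (β - α) := by rw [mul_add]
      _ = 0 + scl (β - α) * B := by rw [key, scl_comm]
      _ = scl (β - α) * B := by rw [zero_add]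
  have hscl_cancel : scl v * (scl (β - α) * B) = B := by
    rw [← mul_assoc, scl_mul_scl, hv, scl_one, one_mul]
  have hidem : IsIdempotentElem p := by
    show p * p = p
    calc p * p = scl v * (scl v * (B * B)) := by
          rw [hp, mul_assoc, scl_left_comm]
      _ = scl v * (scl v * (scl (β - α) * B)) := by rw [key2]
      _ = scl v * B := by rw [hscl_cancel]
  refine ⟨p, hidem, ?_, ?_, ?_⟩
  · -- double commutant
    intro y hy
    have hBy : B * y = y * B := by
      rw [hB, sub_mul, mul_sub, ← hy, scl_comm]
    calc p * y = scl v * (B * y) := by rw [hp, mul_assoc]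
      _ = scl v * (y * B) := by rw [hBy]
      _ = y * (scl v * B) := by rw [← scl_left_comm]
      _ = y * p := by rw [hp]
  · -- A + p is a unit
    obtain ⟨ua, hua⟩ := hα
    set α' : S := ((ua⁻¹ : Sˣ) : S) with ha'def
    have hα' : α * α' = 1 := by
      have := ua.mul_inv; rw [hua] at this; exact this
    have hβ1 : IsUnit (β + 1) := by
      simpa [add_comm] using aux_unit_add isUnit_one hβ
    obtain ⟨ub, hub⟩ := hβ1
    set γ' : S := ((ub⁻¹ : Sˣ) : S) with hg'def
    have hγ : (β + 1) * γ' = 1 := by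
      have := ub.mul_inv; rw [hub] at this; exact this
    set m : S := -((1 + v) * α' * γ') with hmdef
    -- general expansion lemma
    have expand : ∀ r t r' t' : S, r * r' = 1 →
        r * t' + t * r' + t * t' * (β - α) = 0 →
        (scl r + scl t * B) * (scl r' + scl t' * B) = 1 := by
      intro r t r' t' h1 h2
      ext <;> simp [hB] <;>
        first
          | linear_combination h1 + (A.a - α) * h2 + t * t' * hprod' + (-A.a * t * t') * hsum'
          | linear_combination A.b * h2 + (-A.b * t * t') * hsum'
          | linear_combination A.c * h2 + (-A.c * t * t') * hsum'
          | linear_combination h1 + (A.d - α) * h2 + t * t' * hprod' + (-A.d * t * t') * hsum'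
    have hApform : A + p = scl α + scl (1 + v) * B := by
      ext <;> simp [hp, hB] <;> ring
    have hcoeff : α * m + (1 + v) * α' + (1 + v) * m * (β - α) = 0 := by
      rw [hmdef]
      linear_combination (-(1 + v) * α' * γ') * hv + (-(1 + v) * α') * hγ
    have := expand α (1 + v) α' m hα' hcoeff
    rw [← hApform] at this
    have h2 : (scl α' + scl m * B) * (A + p) = 1 := by
      have hcoeff2 : α' * (1 + v) + m * α + m * (1 + v) * (β - α) = 0 := by
        linear_combination hcoeff
      have := expand α' m α (1 + v) (by linear_combination hα') hcoeff2
      rw [← hApform] at this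
      exact this
    exact ⟨⟨A + p, scl α' + scl m * B, this, h2⟩, rfl⟩
  · -- A * p is quasinilpotent
    have hAp : A * p = scl β * (scl v * B) := by
      ext <;> simp [hp, hB] <;>
        first
          | linear_combination (-A.a * v) * hsum' + v * hprod'
          | linear_combination (-A.b * v) * hsum'
          | linear_combination (-A.c * v) * hsum'
          | linear_combination (-A.d * v) * hsum' + v * hprod'
    intro X hX
    have : A * p * X = scl β * (scl v * B * X) := by
      rw [hAp, mul_assoc]
    rw [this]
    exact isUnit_one_add_scl_mul hβ _

end Local

end GenMatrix

section PowerSeriesHensel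

open PowerSeries

variable {R : Type*} [CommRing R]

lemma aux_smod_top_eq {n : ℕ} (I : Ideal R) : (I ^ n • ⊤ : Submodule R R) = I ^ n := by
  rw [smul_eq_mul, Ideal.mul_top]

lemma aux_mem_span_X_pow {n : ℕ} {f : R⟦X⟧} :
    f ∈ (Ideal.span {(X : R⟦X⟧)}) ^ n ↔ ∀ m < n, coeff m f = 0 := by
  rw [Ideal.span_singleton_pow, Ideal.mem_span_singleton, PowerSeries.X_pow_dvd_iff]

instance aux_psAdicComplete : IsAdicComplete (Ideal.span {(X : R⟦X⟧)}) R⟦X⟧ where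
  haus' := by
    intro f hf
    ext m
    have := hf (m + 1)
    rw [SModEq.zero, aux_smod_top_eq, aux_mem_span_X_pow] at this
    simpa using this m (by omega)
  prec' := by
    intro f hf
    refine ⟨PowerSeries.mk (fun n => coeff n (f (n + 1))), fun n => ?_⟩
    rw [SModEq.sub_mem, aux_smod_top_eq, aux_mem_span_X_pow]
    intro m hm
    have := hf (show m + 1 ≤ n by omega)
    rw [SModEq.sub_mem, aux_smod_top_eq, aux_mem_span_X_pow] at this
    have h2 := this m (by omega)
    simp only [map_sub] at h2 ⊢
    simp [sub_eq_zero] at h2 ⊢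
    simpa using h2.symm

lemma aux_hensel_root (τ δ t₀ : R⟦X⟧)
    (h1 : t₀ * t₀ - τ * t₀ + δ ∈ Ideal.span {(X : R⟦X⟧)})
    (h2 : IsUnit (2 * t₀ - τ)) :
    ∃ β : R⟦X⟧, β * β - τ * β + δ = 0 ∧ constantCoeff β = constantCoeff t₀ := by
  have H : HenselianRing R⟦X⟧ (Ideal.span {(X : R⟦X⟧)}) := inferInstance
  set f : Polynomial R⟦X⟧ :=
    Polynomial.X ^ 2 - Polynomial.C τ * Polynomial.X + Polynomial.C δ with hf
  have hmonic : f.Monic := by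
    have : f = Polynomial.X ^ 2 + (-(Polynomial.C τ) * Polynomial.X + Polynomial.C δ) := by
      rw [hf]; ring
    rw [this]
    apply Polynomial.monic_X_pow_add
    refine lt_of_le_of_lt (Polynomial.degree_add_le _ _) ?_
    refine max_lt (lt_of_le_of_lt (Polynomial.degree_mul_le _ _) ?_)
      (lt_of_le_of_lt Polynomial.degree_C_le (by decide))
    calc Polynomial.degree (-(Polynomial.C τ)) + Polynomial.degree (Polynomial.X : Polynomial R⟦X⟧)
          ≤ 0 + 1 := by
          gcongr
          · exact le_trans (Polynomial.degree_neg _).le Polynomial.degree_C_le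
          · exact Polynomial.degree_X_le
      _ < 2 := by decide
  have heval : ∀ t : R⟦X⟧, f.eval t = t * t - τ * t + δ := by
    intro t; rw [hf]; simp; try ring
  have hderiv : f.derivative.eval t₀ = 2 * t₀ - τ := by
    rw [hf]; simp; try ring
  obtain ⟨β, hroot, hmem⟩ :=
    H.is_henselian f hmonic t₀ (by rwa [heval]) (by rw [hderiv]; exact h2.map _)
  refine ⟨β, ?_, ?_⟩
  · have := hroot
    rw [Polynomial.IsRoot, heval] at this
    exact this
  · rw [Ideal.mem_span_singleton] at hmem
    obtain ⟨g, hg⟩ := hmem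
    have : constantCoeff (β - t₀) = 0 := by rw [hg]; simp
    simp only [map_sub, sub_eq_zero] at this
    exact this

lemma aux_roots_exist [IsLocalRing R] (τ δ t₀ : R⟦X⟧)
    (hquad : (X : R⟦X⟧) ∣ (t₀ * t₀ - τ * t₀ + δ))
    (hder : IsUnit (2 * t₀ - τ))
    (ht₀ : ¬IsUnit t₀) (hτt : IsUnit (τ - t₀)) :
    ∃ α β : R⟦X⟧, IsUnit α ∧ ¬IsUnit β ∧ α + β = τ ∧ α * β = δ := by
  obtain ⟨β, hroot, hcc⟩ := aux_hensel_root τ δ t₀ (Ideal.mem_span_singleton.mpr hquad) hder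
  refine ⟨τ - β, β, ?_, ?_, by ring, by linear_combination -hroot⟩
  · rw [PowerSeries.isUnit_iff_constantCoeff]
    rw [PowerSeries.isUnit_iff_constantCoeff] at hτt
    simpa [hcc] using hτt
  · rw [PowerSeries.isUnit_iff_constantCoeff, hcc]
    rw [PowerSeries.isUnit_iff_constantCoeff] at ht₀
    exact ht₀

end PowerSeriesHensel

/-- for a commutative local ring `R` and every `s ∈ xR[[x]]` (a power series
with zero constant term), the ring `K_s(R[[x]])` is quasipolar. -/
theorem genMatrix_powerSeries_isQuasipolarRing_of_constantCoeff_eq_zero {R : Type*}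
    [CommRing R] [IsLocalRing R] (s : PowerSeries R)
    (hs : PowerSeries.constantCoeff s = 0) :
    IsQuasipolarRing (GenMatrix (PowerSeries R) s) := by
  intro A
  have hs_nonunit : ¬IsUnit s := by
    rw [PowerSeries.isUnit_iff_constantCoeff, hs]
    exact not_isUnit_zero
  have hsX : (PowerSeries.X : PowerSeries R) ∣ s := PowerSeries.X_dvd_iff.mpr hs
  by_cases ha : IsUnit A.a <;> by_cases hd : IsUnit A.d
  · -- both diagonal entries units : A is a unit, take p = 0
    refine ⟨0, IsIdempotentElem.zero, fun y _ => by rw [zero_mul, mul_zero], ?_, ?_⟩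
    · rw [add_zero]
      apply GenMatrix.isUnit_of_isUnit_dets
      have : GenMatrix.dets A = A.a * A.d + -(s * (A.b * A.c)) := by
        simp [GenMatrix.dets]; ring
      rw [this]
      exact aux_unit_add (ha.mul hd) (aux_nonunit_neg (aux_nonunit_mul hs_nonunit _))
    · rw [mul_zero]
      intro x hx
      simpa using isUnit_one
  · -- a unit, d nonunit
    have hquad : (PowerSeries.X : PowerSeries R) ∣
        (A.d * A.d - GenMatrix.tr A * A.d + GenMatrix.dets A) := by
      have : A.d * A.d - GenMatrix.tr A * A.d + GenMatrix.dets A = -(s * (A.b * A.c)) := by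
        simp [GenMatrix.tr, GenMatrix.dets]; ring
      rw [this]
      exact dvd_neg.mpr (hsX.mul_right _)
    have hder : IsUnit (2 * A.d - GenMatrix.tr A) := by
      have : 2 * A.d - GenMatrix.tr A = -(A.a + -A.d) := by
        simp [GenMatrix.tr]; ring
      rw [this]
      exact (aux_unit_add ha (aux_nonunit_neg hd)).neg
    have hτt : IsUnit (GenMatrix.tr A - A.d) := by
      have : GenMatrix.tr A - A.d = A.a := by simp [GenMatrix.tr]
      rwa [this]
    obtain ⟨α, β, hα, hβ, hsum, hprod⟩ :=
      aux_roots_exist (GenMatrix.tr A) (GenMatrix.dets A) A.d hquad hder hd hτt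
    exact GenMatrix.isQuasipolar_of_roots A α β hα hβ hsum hprod
  · -- a nonunit, d unit
    have hquad : (PowerSeries.X : PowerSeries R) ∣
        (A.a * A.a - GenMatrix.tr A * A.a + GenMatrix.dets A) := by
      have : A.a * A.a - GenMatrix.tr A * A.a + GenMatrix.dets A = -(s * (A.b * A.c)) := by
        simp [GenMatrix.tr, GenMatrix.dets]; ring
      rw [this]
      exact dvd_neg.mpr (hsX.mul_right _)
    have hder : IsUnit (2 * A.a - GenMatrix.tr A) := by
      have : 2 * A.a - GenMatrix.tr A = -(A.d + -A.a) := by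
        simp [GenMatrix.tr]; ring
      rw [this]
      exact (aux_unit_add hd (aux_nonunit_neg ha)).neg
    have hτt : IsUnit (GenMatrix.tr A - A.a) := by
      have : GenMatrix.tr A - A.a = A.d := by simp [GenMatrix.tr]
      rwa [this]
    obtain ⟨α, β, hα, hβ, hsum, hprod⟩ :=
      aux_roots_exist (GenMatrix.tr A) (GenMatrix.dets A) A.a hquad hder ha hτt
    exact GenMatrix.isQuasipolar_of_roots A α β hα hβ hsum hprod
  · -- both nonunits : take p = 1
    refine ⟨1, IsIdempotentElem.one, fun y _ => by rw [one_mul, mul_one], ?_, ?_⟩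
    · rw [add_comm]
      exact GenMatrix.isUnit_one_add_of_nonunits hs_nonunit ha hd
    · rw [mul_one]
      intro x hx
      obtain ⟨h1, h2⟩ := GenMatrix.nonunit_entries_mul hs_nonunit ha hd x
      exact GenMatrix.isUnit_one_add_of_nonunits hs_nonunit h1 h2
end

section
/- Let R be a commutative local ring, n ≥ 1, and let s = Σ_{i=0}^{n−1} s_i x^i ∈ R[x]/(x^n). Then K_s(R[x]/(x^n)) is quasipolar if and only if K_{s₀}(R) is quasipolar. In particular, for all 1 ≤ m ≤ n, the ring K_{x^m}(R[x]/(x^n)) is quasipolar. -/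
namespace Aux18

open GenMatrix IsLocalRing

variable {S : Type*} [CommRing S] {s : S}

/-- Scalar matrix. -/
def sc (s : S) (x : S) : GenMatrix S s := ⟨x, 0, 0, x⟩

@[simp] lemma sc_a (x : S) : (sc s x).a = x := rfl
@[simp] lemma sc_b (x : S) : (sc s x).b = 0 := rfl
@[simp] lemma sc_c (x : S) : (sc s x).c = 0 := rfl
@[simp] lemma sc_d (x : S) : (sc s x).d = x := rfl

lemma sc_zero : sc s 0 = 0 := by ext <;> simp

lemma sc_comm (x : S) (M : GenMatrix S s) : sc s x * M = M * sc s x := by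
  ext <;> simp <;> ring

lemma dets_mul (X Y : GenMatrix S s) : (X * Y).dets = X.dets * Y.dets := by
  simp [GenMatrix.dets]; ring

lemma dets_one : (1 : GenMatrix S s).dets = 1 := by simp [GenMatrix.dets]

lemma isUnit_of_dets {X : GenMatrix S s} (h : IsUnit X.dets) : IsUnit X := by
  obtain ⟨v, hv⟩ := h.exists_right_inv
  have hv' : (X.a * X.d - s * (X.b * X.c)) * v = 1 := hv
  refine ⟨⟨X, ⟨v * X.d, -(v * X.b), -(v * X.c), v * X.a⟩, ?_, ?_⟩, rfl⟩ <;>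
    ext <;> simp <;> (first | ring1 | linear_combination hv')

lemma dets_isUnit {X : GenMatrix S s} (h : IsUnit X) : IsUnit X.dets := by
  obtain ⟨u, rfl⟩ := h
  have := congrArg GenMatrix.dets u.mul_inv
  rw [dets_mul, dets_one] at this
  exact IsUnit.of_mul_eq_one _ this

lemma cayley_hamilton (M : GenMatrix S s) :
    M * M + sc s M.dets = sc s M.tr * M := by
  ext <;> simp [GenMatrix.dets, GenMatrix.tr] <;> ring

lemma dets_one_add (W : GenMatrix S s) :
    (1 + W).dets = 1 + W.tr + W.dets := by
  simp [GenMatrix.dets, GenMatrix.tr]; ring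

end Aux18
namespace Aux18

open GenMatrix IsLocalRing

variable {S : Type*} [CommRing S] [IsLocalRing S] {s : S}

lemma mem_max_iff {x : S} : x ∈ maximalIdeal S ↔ ¬IsUnit x := by
  rw [IsLocalRing.mem_maximalIdeal, mem_nonunits_iff]

lemma isUnit_add_of_mem {u x : S} (hu : IsUnit u) (hx : x ∈ maximalIdeal S) :
    IsUnit (u + x) := by
  by_contra h
  rw [← mem_max_iff] at h
  exact (mem_max_iff.mp (by simpa using (Ideal.sub_mem _ h hx))) hu

lemma isUnit_one_add_of_mem {x : S} (hx : x ∈ maximalIdeal S) : IsUnit (1 + x) :=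
  isUnit_add_of_mem isUnit_one hx

/-- The key trace lemma: if `Z` has trace and determinant in the maximal ideal,
and `X` commutes with `Z`, then `tr (Z*X)` lies in the maximal ideal. -/
lemma tr_mul_mem {Z X : GenMatrix S s} (htr : Z.tr ∈ maximalIdeal S)
    (hdet : Z.dets ∈ maximalIdeal S) (hcomm : Z * X = X * Z) :
    (Z * X).tr ∈ maximalIdeal S := by
  have hE1 : Z.a * X.a + s * (Z.b * X.c) = X.a * Z.a + s * (X.b * Z.c) :=
    congrArg GenMatrix.a hcomm
  have hE2 : Z.a * X.b + Z.b * X.d = X.a * Z.b + X.b * Z.d :=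
    congrArg GenMatrix.b hcomm
  have hE3 : Z.c * X.a + Z.d * X.c = X.c * Z.a + X.d * Z.c :=
    congrArg GenMatrix.c hcomm
  have hE4 : s * (Z.c * X.b) + Z.d * X.d = s * (X.c * Z.b) + X.d * Z.d :=
    congrArg GenMatrix.d hcomm
  have htr' : Z.a + Z.d ∈ maximalIdeal S := htr
  have hdet' : Z.a * Z.d - s * (Z.b * Z.c) ∈ maximalIdeal S := hdet
  show Z.a * X.a + s * (Z.b * X.c) + (s * (Z.c * X.b) + Z.d * X.d) ∈ maximalIdeal S
  set g := Z.a * X.a + s * (Z.b * X.c) + (s * (Z.c * X.b) + Z.d * X.d) with hg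
  by_cases hc : IsUnit Z.c
  · obtain ⟨w, hw⟩ := hc.exists_right_inv
    have key : Z.c * g = (Z.a + Z.d) * (Z.c * X.d + X.c * Z.a)
        - 2 * X.c * (Z.a * Z.d - s * (Z.b * Z.c)) := by
      linear_combination Z.a * hE3 - Z.c * hE1
    have hmem : Z.c * g ∈ maximalIdeal S := by
      rw [key]
      exact Ideal.sub_mem _ (Ideal.mul_mem_right _ _ htr')
        (Ideal.mul_mem_left _ _ hdet')
    have : g = w * (Z.c * g) := by
      rw [← mul_assoc, mul_comm w Z.c, hw, one_mul]
    rw [this]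
    exact Ideal.mul_mem_left _ _ hmem
  · by_cases hb : IsUnit Z.b
    · obtain ⟨w, hw⟩ := hb.exists_right_inv
      have key : Z.b * g = (Z.a + Z.d) * (Z.b * X.a + X.b * Z.d)
          - 2 * X.b * (Z.a * Z.d - s * (Z.b * Z.c)) := by
        linear_combination Z.d * hE2 - Z.b * hE4
      have hmem : Z.b * g ∈ maximalIdeal S := by
        rw [key]
        exact Ideal.sub_mem _ (Ideal.mul_mem_right _ _ htr')
          (Ideal.mul_mem_left _ _ hdet')
      have : g = w * (Z.b * g) := by
        rw [← mul_assoc, mul_comm w Z.b, hw, one_mul]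
      rw [this]
      exact Ideal.mul_mem_left _ _ hmem
    · rw [← mem_max_iff] at hb hc
      have had : Z.a * Z.d ∈ maximalIdeal S := by
        have : Z.a * Z.d = (Z.a * Z.d - s * (Z.b * Z.c)) + s * (Z.b * Z.c) := by ring
        rw [this]
        exact Ideal.add_mem _ hdet' (Ideal.mul_mem_left _ _ (Ideal.mul_mem_right _ _ hb))
      have hZa : Z.a ∈ maximalIdeal S ∧ Z.d ∈ maximalIdeal S := by
        rcases ((IsLocalRing.maximalIdeal.isMaximal S).isPrime.mem_or_mem had) with h | h
        · exact ⟨h, by simpa using Ideal.sub_mem _ htr' h⟩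
        · exact ⟨by simpa using Ideal.sub_mem _ htr' h, h⟩
      refine Ideal.add_mem _ (Ideal.add_mem _ ?_ ?_) (Ideal.add_mem _ ?_ ?_)
      · exact Ideal.mul_mem_right _ _ hZa.1
      · exact Ideal.mul_mem_left _ _ (Ideal.mul_mem_right _ _ hb)
      · exact Ideal.mul_mem_left _ _ (Ideal.mul_mem_right _ _ hc)
      · exact Ideal.mul_mem_right _ _ hZa.2

/-- quasinilpotency criterion. -/
lemma quasinil_of_mem {Z : GenMatrix S s} (htr : Z.tr ∈ maximalIdeal S)
    (hdet : Z.dets ∈ maximalIdeal S) : IsQuasinilpotent Z := by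
  intro X hX
  apply isUnit_of_dets
  rw [dets_one_add]
  have h1 : (Z * X).tr ∈ maximalIdeal S := tr_mul_mem htr hdet hX
  have h2 : (Z * X).dets ∈ maximalIdeal S := by
    rw [dets_mul]; exact Ideal.mul_mem_right _ _ hdet
  have : (1 : S) + (Z * X).tr + (Z * X).dets = 1 + ((Z * X).tr + (Z * X).dets) := by ring
  rw [this]
  exact isUnit_one_add_of_mem (Ideal.add_mem _ h1 h2)

end Aux18
namespace Aux18

open GenMatrix IsLocalRing

variable {S : Type*} [CommRing S] [IsLocalRing S] {s : S}

lemma qp_of_dets_isUnit {A : GenMatrix S s} (h : IsUnit A.dets) : IsQuasipolar A := by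
  refine ⟨0, by simp [IsIdempotentElem], fun y _ => by rw [zero_mul, mul_zero], ?_, ?_⟩
  · rw [add_zero]; exact isUnit_of_dets h
  · rw [mul_zero]
    intro x _
    rw [zero_mul, add_zero]
    exact isUnit_one

lemma qp_of_tr_dets_mem {A : GenMatrix S s} (htr : A.tr ∈ maximalIdeal S)
    (hdet : A.dets ∈ maximalIdeal S) : IsQuasipolar A := by
  refine ⟨1, by simp [IsIdempotentElem], fun y _ => by rw [one_mul, mul_one], ?_, ?_⟩
  · apply isUnit_of_dets
    rw [add_comm A 1, dets_one_add]
    rw [show (1 : S) + A.tr + A.dets = 1 + (A.tr + A.dets) by ring]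
    exact isUnit_one_add_of_mem (Ideal.add_mem _ htr hdet)
  · rw [mul_one]
    exact quasinil_of_mem htr hdet

/-- The mixed case: trace a unit, determinant in the maximal ideal, and the
characteristic quadratic has a root in the maximal ideal. -/
lemma qp_of_root {A : GenMatrix S s} (htr : IsUnit A.tr) {l : S}
    (hl : l ∈ maximalIdeal S) (hdet : A.dets ∈ maximalIdeal S)
    (heq : l * l - A.tr * l + A.dets = 0) : IsQuasipolar A := by
  have h2l : IsUnit (A.tr - 2 * l) := by
    rw [sub_eq_add_neg]
    exact isUnit_add_of_mem htr (neg_mem (Ideal.mul_mem_left _ _ hl))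
  obtain ⟨v, hv⟩ := h2l.exists_right_inv
  have hv' : (A.a + A.d - 2 * l) * v = 1 := hv
  have heq' : l * l - (A.a + A.d) * l + (A.a * A.d - s * (A.b * A.c)) = 0 := heq
  set p : GenMatrix S s := ⟨v * (A.d - l), -(v * A.b), -(v * A.c), v * (A.a - l)⟩ with hp
  have hvu : IsUnit v := IsUnit.of_mul_eq_one (A.a + A.d - 2 * l) (by linear_combination hv')
  refine ⟨p, ?_, ?_, ?_, ?_⟩
  · -- idempotent
    show p * p = p
    ext <;> simp [hp] <;>
      (first
        | linear_combination (v * (A.d - l)) * hv' - v ^ 2 * heq'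
        | linear_combination (v * (A.a - l)) * hv' - v ^ 2 * heq'
        | linear_combination (-(v * A.b)) * hv'
        | linear_combination (-(v * A.c)) * hv')
  · -- double commutant
    intro y hy
    have hE1 : y.a * A.a + s * (y.b * A.c) = A.a * y.a + s * (A.b * y.c) :=
      congrArg GenMatrix.a hy
    have hE2 : y.a * A.b + y.b * A.d = A.a * y.b + A.b * y.d :=
      congrArg GenMatrix.b hy
    have hE3 : y.c * A.a + y.d * A.c = A.c * y.a + A.d * y.c :=
      congrArg GenMatrix.c hy
    have hE4 : s * (y.c * A.b) + y.d * A.d = s * (A.c * y.b) + A.d * y.d :=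
      congrArg GenMatrix.d hy
    ext <;> simp [hp] <;>
      (first
        | linear_combination v * hE1
        | linear_combination (-v) * hE1
        | linear_combination v * hE2
        | linear_combination (-v) * hE2
        | linear_combination v * hE3
        | linear_combination (-v) * hE3
        | linear_combination v * hE4
        | linear_combination (-v) * hE4)
  · -- A + p is a unit
    apply isUnit_of_dets
    have key : (A + p).dets
        = (A.a + A.d - l) * ((A.a + A.d) * v + l * (1 - 2 * v)) := by
      show (A.a + v * (A.d - l)) * (A.d + v * (A.a - l))
          - s * ((A.b + -(v * A.b)) * (A.c + -(v * A.c)))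
          = (A.a + A.d - l) * ((A.a + A.d) * v + l * (1 - 2 * v))
      linear_combination ((1 - v) ^ 2) * heq'
    rw [key, sub_eq_add_neg]
    have htr' : IsUnit (A.a + A.d) := htr
    exact (isUnit_add_of_mem htr' (neg_mem hl)).mul
      (isUnit_add_of_mem (htr'.mul hvu) (Ideal.mul_mem_right _ _ hl))
  · -- A * p is quasinilpotent
    apply quasinil_of_mem
    · show (A * p).a + (A * p).d ∈ maximalIdeal S
      have : (A * p).a + (A * p).d
          = v * (2 * (A.a * A.d - s * (A.b * A.c)) - l * (A.a + A.d)) := by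
        simp [hp]; ring
      rw [this]
      exact Ideal.mul_mem_left _ _
        (Ideal.sub_mem _ (Ideal.mul_mem_left _ _ hdet) (Ideal.mul_mem_right _ _ hl))
    · rw [dets_mul]
      exact Ideal.mul_mem_right _ _ hdet

end Aux18
namespace Aux18

open GenMatrix IsLocalRing

set_option linter.unusedSectionVars false

variable {S : Type*} [CommRing S] [IsLocalRing S] {s : S}

lemma tr_sc_mul (x : S) (M : GenMatrix S s) : (sc s x * M).tr = x * M.tr := by
  simp [GenMatrix.tr]; ring

lemma tr_add' (M N : GenMatrix S s) : (M + N).tr = M.tr + N.tr := by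
  simp [GenMatrix.tr]; ring

lemma dets_one_add_mul_sc (M : GenMatrix S s) (x : S) :
    (1 + M * sc s x).dets = 1 + x * M.tr + x ^ 2 * M.dets := by
  simp [GenMatrix.dets, GenMatrix.tr, sc]; ring

lemma root_of_qp {A : GenMatrix S s} (hA : IsQuasipolar A) (ht : IsUnit A.tr)
    (hD : ¬IsUnit A.dets) :
    ∃ l, l ∈ maximalIdeal S ∧ l * l - A.tr * l + A.dets = 0 := by
  obtain ⟨p, hidem, hcomm, hunit, hqnil⟩ := hA
  have hpA : p * A = A * p := hcomm A rfl
  have hidem' : p * p = p := hidem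
  -- `dets p` is idempotent
  have hdets_p_sq : p.dets * p.dets = p.dets := by
    have h := dets_mul p p
    rw [hidem'] at h
    linear_combination -h
  -- `dets p` is not a unit
  have hDp_nonunit : ¬IsUnit p.dets := by
    intro hu
    have hp1 : p = 1 := (isUnit_of_dets hu).mul_left_cancel (by rw [hidem', mul_one])
    rw [hp1, mul_one] at hqnil
    obtain ⟨w, hw⟩ := ht.exists_right_inv
    have hu1 := hqnil (sc s (-w)) (sc_comm (-w) A).symm
    have hd := dets_isUnit hu1
    rw [dets_one_add_mul_sc] at hd
    have hcalc : 1 + -w * A.tr + (-w) ^ 2 * A.dets = A.dets * (w * w) := by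
      linear_combination -hw
    rw [hcalc] at hd
    exact hD (isUnit_of_mul_isUnit_left hd)
  -- hence `dets p = 0`
  have hDp0 : p.dets = 0 := by
    have h1 : IsUnit (1 - p.dets) := by
      rw [sub_eq_add_neg]
      exact isUnit_one_add_of_mem (neg_mem (mem_max_iff.mpr hDp_nonunit))
    obtain ⟨w, hw⟩ := h1.exists_right_inv
    have h2 : p.dets * ((1 - p.dets) * w) = p.dets := by rw [hw, mul_one]
    linear_combination -h2 - w * hdets_p_sq
  -- Cayley-Hamilton for p gives `p = sc p.tr * p`
  have hCHp : p = sc s p.tr * p := by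
    have h := cayley_hamilton (s := s) p
    rwa [hidem', hDp0, sc_zero, add_zero] at h
  -- `tr p` is idempotent
  have hπ2 : p.tr * p.tr = p.tr := by
    have h := congrArg GenMatrix.tr hCHp
    rw [tr_sc_mul] at h
    linear_combination -h
  -- `tr p` is a unit
  have hπu : IsUnit p.tr := by
    by_contra h
    have h1 : IsUnit (1 - p.tr) := by
      rw [sub_eq_add_neg]
      exact isUnit_one_add_of_mem (neg_mem (mem_max_iff.mpr h))
    obtain ⟨w, hw⟩ := h1.exists_right_inv
    have h2 : p.tr * ((1 - p.tr) * w) = p.tr := by rw [hw, mul_one]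
    have hπ0 : p.tr = 0 := by linear_combination -h2 - w * hπ2
    rw [hπ0, sc_zero, zero_mul] at hCHp
    rw [hCHp, add_zero] at hunit
    exact hD (dets_isUnit hunit)
  have hπ1 : p.tr = 1 := hπu.mul_left_cancel (by rw [hπ2, mul_one])
  -- the trace of A*p
  set θ := (A * p).tr with hθ
  have hdetsAp : (A * p).dets = 0 := by rw [dets_mul, hDp0, mul_zero]
  -- θ is not a unit
  have hθ_nonunit : ¬IsUnit θ := by
    intro hu
    obtain ⟨w, hw⟩ := hu.exists_right_inv
    have hu1 := hqnil (sc s (-w)) (sc_comm (-w) (A * p)).symm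
    have hd := dets_isUnit hu1
    rw [dets_one_add_mul_sc, hdetsAp] at hd
    have hcalc : 1 + -w * (A * p).tr + (-w) ^ 2 * 0 = 0 := by linear_combination -hw
    rw [hcalc] at hd
    exact zero_ne_one (isUnit_zero_iff.mp hd)
  -- key multiplication identity
  have hkey1 : A * p * (A * p) = A * A * p := by
    calc A * p * (A * p) = A * (p * A) * p := by
            rw [mul_assoc A p (A * p), ← mul_assoc p A p, ← mul_assoc]
      _ = A * (A * p) * p := by rw [hpA]
      _ = A * A * (p * p) := by rw [← mul_assoc A A p, mul_assoc (A * A) p p]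
      _ = A * A * p := by rw [hidem']
  -- Cayley-Hamilton for A*p
  have hCH1 : A * p * (A * p) = sc s θ * (A * p) := by
    have h := cayley_hamilton (s := s) (A * p)
    rwa [hdetsAp, sc_zero, add_zero] at h
  -- Cayley-Hamilton for A, multiplied by p
  have hCH2 : A * A * p + sc s A.dets * p = sc s A.tr * A * p := by
    rw [← add_mul, cayley_hamilton]
  have hM : sc s θ * (A * p) + sc s A.dets * p = sc s A.tr * (A * p) := by
    rw [← hCH1, hkey1, hCH2, mul_assoc]
  have htrM := congrArg GenMatrix.tr hM
  rw [tr_add', tr_sc_mul, tr_sc_mul, tr_sc_mul, hπ1, ← hθ] at htrM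
  refine ⟨θ, mem_max_iff.mpr hθ_nonunit, by linear_combination htrM⟩

end Aux18
namespace Aux18

open GenMatrix IsLocalRing

set_option linter.unusedSectionVars false

/-- The quadratic-root condition characterizing quasipolarity of `K_s(S)`. -/
def Cond (S : Type*) [CommRing S] (s : S) : Prop :=
  ∀ a b c d : S, IsUnit (a + d) → ¬IsUnit (a * d - s * (b * c)) →
    ∃ l : S, ¬IsUnit l ∧ l * l - (a + d) * l + (a * d - s * (b * c)) = 0

section Char

variable {S : Type*} [CommRing S] [IsLocalRing S]

theorem isQuasipolarRing_iff_cond (s : S) :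
    IsQuasipolarRing (GenMatrix S s) ↔ Cond S s := by
  constructor
  · intro h a b c d ht hD
    obtain ⟨l, hl, heq⟩ :=
      root_of_qp (A := (⟨a, b, c, d⟩ : GenMatrix S s)) (h _) ht hD
    exact ⟨l, mem_max_iff.mp hl, heq⟩
  · intro hc A
    by_cases hD : IsUnit A.dets
    · exact qp_of_dets_isUnit hD
    · by_cases ht : IsUnit A.tr
      · obtain ⟨l, hl, heq⟩ := hc A.a A.b A.c A.d ht hD
        exact qp_of_root ht (mem_max_iff.mpr hl) (mem_max_iff.mpr hD) heq
      · exact qp_of_tr_dets_mem (mem_max_iff.mpr ht) (mem_max_iff.mpr hD)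

lemma nonunit_of_mem_nil {N : Ideal S} {k : ℕ} (hN : N ^ k = ⊥) {x : S}
    (hx : x ∈ N) : ¬IsUnit x := by
  intro hu
  have hxk : x ^ k ∈ N ^ k := Ideal.pow_mem_pow hx k
  rw [hN, Ideal.mem_bot] at hxk
  have : IsUnit ((0 : S)) := hxk ▸ hu.pow k
  exact zero_ne_one (isUnit_zero_iff.mp this)

lemma hensel_quad {t D : S} (ht : IsUnit t) :
    ∀ (k : ℕ) (N : Ideal S), N ^ k = ⊥ → ∀ l₀ : S, ¬IsUnit l₀ →
      l₀ * l₀ - t * l₀ + D ∈ N → ∃ l : S, ¬IsUnit l ∧ l * l - t * l + D = 0 := by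
  intro k
  induction k with
  | zero =>
    intro N hN l₀ _ _
    exfalso
    have h1 : (1 : S) ∈ N ^ 0 := by rw [pow_zero, Ideal.one_eq_top]; trivial
    rw [hN, Ideal.mem_bot] at h1
    exact one_ne_zero h1
  | succ k ih =>
    intro N hN l₀ hl₀ hmem
    rcases Nat.eq_zero_or_pos k with hk | hk
    · subst hk
      rw [pow_one] at hN
      rw [hN, Ideal.mem_bot] at hmem
      exact ⟨l₀, hl₀, hmem⟩
    · have hder : IsUnit (t - 2 * l₀) := by
        rw [sub_eq_add_neg]
        exact isUnit_add_of_mem ht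
          (neg_mem (Ideal.mul_mem_left _ _ (mem_max_iff.mpr hl₀)))
      obtain ⟨v, hv⟩ := hder.exists_right_inv
      set ε := l₀ * l₀ - t * l₀ + D with hε
      set l₁ := l₀ + ε * v with hl₁def
      have hval : l₁ * l₁ - t * l₁ + D = ε * ε * (v * v) := by
        rw [hl₁def, hε]
        linear_combination (-(l₀ * l₀ - t * l₀ + D)) * hv
      have hmem1 : l₁ * l₁ - t * l₁ + D ∈ N ^ 2 := by
        rw [hval]
        have h2 : ε * ε ∈ N ^ 2 := by
          rw [pow_two]; exact Ideal.mul_mem_mul hmem hmem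
        exact Ideal.mul_mem_right _ _ h2
      have hl₁ : ¬IsUnit l₁ := by
        rw [← mem_max_iff]
        exact Ideal.add_mem _ (mem_max_iff.mpr hl₀)
          (Ideal.mul_mem_right _ _ (mem_max_iff.mpr (nonunit_of_mem_nil hN hmem)))
      refine ih (N ^ 2) ?_ l₁ hl₁ hmem1
      rw [← pow_mul]
      refine le_bot_iff.mp ?_
      calc N ^ (2 * k) ≤ N ^ (k + 1) := Ideal.pow_le_pow_right (by omega)
        _ = ⊥ := hN

end Char

section Transfer

variable {S S' : Type*} [CommRing S] [CommRing S']

lemma isUnit_of_map_isUnit (φ : S →+* S') (hsurj : Function.Surjective φ)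
    {k : ℕ} (hker : RingHom.ker φ ^ k = ⊥) {x : S} (h : IsUnit (φ x)) :
    IsUnit x := by
  obtain ⟨b, hb⟩ := h.exists_right_inv
  obtain ⟨y, rfl⟩ := hsurj b
  have hmem : x * y - 1 ∈ RingHom.ker φ := by
    rw [RingHom.mem_ker, map_sub, map_mul, map_one, hb, sub_self]
  have hnil : IsNilpotent (x * y - 1) := by
    refine ⟨k, ?_⟩
    have := Ideal.pow_mem_pow hmem k
    rwa [hker, Ideal.mem_bot] at this
  have hxy : IsUnit (x * y) := by
    rw [show x * y = 1 + (x * y - 1) by ring]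
    exact hnil.isUnit_one_add
  exact isUnit_of_mul_isUnit_left hxy

lemma isLocalRing_of_nil_ker [Nontrivial S] [IsLocalRing S'] (φ : S →+* S')
    (hsurj : Function.Surjective φ) {k : ℕ} (hker : RingHom.ker φ ^ k = ⊥) :
    IsLocalRing S := by
  refine IsLocalRing.of_isUnit_or_isUnit_one_sub_self fun a => ?_
  rcases IsLocalRing.isUnit_or_isUnit_one_sub_self (φ a) with h | h
  · exact Or.inl (isUnit_of_map_isUnit φ hsurj hker h)
  · refine Or.inr (isUnit_of_map_isUnit φ hsurj hker ?_)
    rwa [map_sub, map_one]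

lemma cond_transfer [IsLocalRing S] [IsLocalRing S'] (φ : S →+* S')
    (hsurj : Function.Surjective φ) {k : ℕ} (hker : RingHom.ker φ ^ k = ⊥)
    (s : S) : Cond S s ↔ Cond S' (φ s) := by
  constructor
  · intro h a' b' c' d' ht' hD'
    obtain ⟨a, rfl⟩ := hsurj a'
    obtain ⟨b, rfl⟩ := hsurj b'
    obtain ⟨c, rfl⟩ := hsurj c'
    obtain ⟨d, rfl⟩ := hsurj d'
    have ht : IsUnit (a + d) :=
      isUnit_of_map_isUnit φ hsurj hker (by rw [map_add]; exact ht')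
    have hD : ¬IsUnit (a * d - s * (b * c)) := by
      intro hu
      exact hD' (by simpa only [map_sub, map_mul] using hu.map φ)
    obtain ⟨l, hl, heq⟩ := h a b c d ht hD
    refine ⟨φ l, fun hu => hl (isUnit_of_map_isUnit φ hsurj hker hu), ?_⟩
    have := congrArg φ heq
    simpa only [map_add, map_sub, map_mul, map_zero] using this
  · intro h a b c d ht hD
    have ht' : IsUnit (φ a + φ d) := by rw [← map_add]; exact ht.map φ
    have hD' : ¬IsUnit (φ a * φ d - φ s * (φ b * φ c)) := by
      intro hu
      refine hD (isUnit_of_map_isUnit φ hsurj hker ?_)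
      simpa only [map_sub, map_mul] using hu
    obtain ⟨l', hl', heq'⟩ := h (φ a) (φ b) (φ c) (φ d) ht' hD'
    obtain ⟨l₀, rfl⟩ := hsurj l'
    have hl₀ : ¬IsUnit l₀ := fun hu => hl' (hu.map φ)
    have hmem : l₀ * l₀ - (a + d) * l₀ + (a * d - s * (b * c)) ∈ RingHom.ker φ := by
      simp only [RingHom.mem_ker, map_add, map_sub, map_mul]
      exact heq'
    exact hensel_quad ht k (RingHom.ker φ) hker l₀ hl₀ hmem

end Transfer

end Aux18
namespace Aux18

open GenMatrix IsLocalRing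

lemma cond_zero (R : Type*) [CommRing R] [IsLocalRing R] : Cond R 0 := by
  intro a b c d ht hD
  have had : a * d ∈ maximalIdeal R := by
    have := mem_max_iff.mpr hD
    rwa [zero_mul, sub_zero] at this
  rcases ((IsLocalRing.maximalIdeal.isMaximal R).isPrime.mem_or_mem had) with h | h
  · exact ⟨a, mem_max_iff.mp h, by ring⟩
  · exact ⟨d, mem_max_iff.mp h, by ring⟩

lemma chain_gen {S : Type*} [CommRing S] [Nontrivial S] (N : Ideal S) {n : ℕ}
    (hN : N ^ n = ⊥) {T : Type*} [CommRing T] [IsLocalRing T] (e : S ⧸ N ≃+* T) (s : S) :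
    IsQuasipolarRing (GenMatrix S s) ↔
      IsQuasipolarRing (GenMatrix T ((e : S ⧸ N →+* T) (Ideal.Quotient.mk N s))) := by
  haveI : Nontrivial (S ⧸ N) :=
    ⟨⟨e.symm 0, e.symm 1, fun h => zero_ne_one (e.symm.injective h)⟩⟩
  haveI : IsLocalRing (S ⧸ N) := IsLocalRing.of_surjective' e.symm.toRingHom e.symm.surjective
  have hker : RingHom.ker (Ideal.Quotient.mk N) ^ n = ⊥ := by
    rw [Ideal.mk_ker]; exact hN
  haveI : IsLocalRing S := isLocalRing_of_nil_ker (Ideal.Quotient.mk N) Ideal.Quotient.mk_surjective hker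
  have hkere : RingHom.ker (e : S ⧸ N →+* T) ^ 1 = ⊥ := by
    rw [pow_one, RingHom.ker_coe_equiv]
  rw [isQuasipolarRing_iff_cond, isQuasipolarRing_iff_cond,
    cond_transfer (Ideal.Quotient.mk N) Ideal.Quotient.mk_surjective hker,
    cond_transfer (e : S ⧸ N →+* T) e.surjective hkere]

end Aux18


/-- for a commutative local ring `R`, `n ≥ 1` and
`s ∈ R[x]/(xⁿ)` represented by a polynomial `σ`, the ring `K_s(R[x]/(xⁿ))` is quasipolar
iff `K_{s₀}(R)` is quasipolar, where `s₀ = σ(0)`; in particular `K_{xᵐ}(R[x]/(xⁿ))` is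
quasipolar for all `1 ≤ m ≤ n`. -/
theorem genMatrix_polynomialQuotient_isQuasipolarRing_iff {R : Type*} [CommRing R]
    [IsLocalRing R] (n : ℕ) (hn : 1 ≤ n) :
    (∀ σ : Polynomial R,
      IsQuasipolarRing
        (GenMatrix (Polynomial R ⧸ Ideal.span {(Polynomial.X : Polynomial R) ^ n})
          (Ideal.Quotient.mk (Ideal.span {(Polynomial.X : Polynomial R) ^ n}) σ)) ↔
      IsQuasipolarRing (GenMatrix R (σ.coeff 0))) ∧
    (∀ m : ℕ, 1 ≤ m → m ≤ n →
      IsQuasipolarRing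
        (GenMatrix (Polynomial R ⧸ Ideal.span {(Polynomial.X : Polynomial R) ^ n})
          (Ideal.Quotient.mk (Ideal.span {(Polynomial.X : Polynomial R) ^ n})
            (Polynomial.X ^ m)))) := by
  classical
  set I : Ideal (Polynomial R) := Ideal.span {(Polynomial.X : Polynomial R) ^ n} with hI
  set J : Ideal (Polynomial R) := Ideal.span {(Polynomial.X : Polynomial R)} with hJdef
  have hle : I ≤ J := Ideal.span_singleton_le_span_singleton.mpr
    (dvd_pow_self Polynomial.X (by omega))
  -- Nontriviality of the quotient
  have hI_ne_top : I ≠ ⊤ := by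
    intro h
    rw [Ideal.eq_top_iff_one, Ideal.mem_span_singleton] at h
    obtain ⟨q, hq⟩ := h
    have h0 := congrArg (Polynomial.eval 0) hq
    simp [Polynomial.eval_mul, Polynomial.eval_pow, zero_pow (by omega : n ≠ 0)] at h0
  haveI : Nontrivial (Polynomial R ⧸ I) := Ideal.Quotient.nontrivial_iff.mpr hI_ne_top
  -- The nilpotent ideal
  set N : Ideal (Polynomial R ⧸ I) := J.map (Ideal.Quotient.mk I) with hNdef
  have hNpow : N ^ n = ⊥ := by
    rw [hNdef, ← Ideal.map_pow, hJdef, Ideal.span_singleton_pow, ← hI,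
      Ideal.map_quotient_self]
  -- The isomorphism (Polynomial R ⧸ I) ⧸ N ≃+* R
  have hJ' : J = Ideal.span {Polynomial.X - Polynomial.C (0 : R)} := by
    rw [Polynomial.C_0, sub_zero]
  set e2 : (Polynomial R ⧸ J) ≃+* R :=
    (Ideal.quotEquivOfEq hJ').trans (Polynomial.quotientSpanXSubCAlgEquiv (0 : R)).toRingEquiv
    with he2
  set e1 : ((Polynomial R ⧸ I) ⧸ N) ≃+* (Polynomial R ⧸ J) :=
    DoubleQuot.quotQuotEquivQuotOfLE hle with he1
  set e3 : ((Polynomial R ⧸ I) ⧸ N) ≃+* R := e1.trans e2 with he3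
  -- Local ring instances
  haveI : Nontrivial ((Polynomial R ⧸ I) ⧸ N) :=
    ⟨⟨e3.symm 0, e3.symm 1, fun h => zero_ne_one (e3.symm.injective h)⟩⟩
  haveI : IsLocalRing ((Polynomial R ⧸ I) ⧸ N) :=
    IsLocalRing.of_surjective' e3.symm.toRingHom e3.symm.surjective
  have hkermk : RingHom.ker (Ideal.Quotient.mk N) ^ n = ⊥ := by
    rw [Ideal.mk_ker]; exact hNpow
  haveI hSloc : IsLocalRing (Polynomial R ⧸ I) :=
    Aux18.isLocalRing_of_nil_ker (S := Polynomial R ⧸ I) (S' := (Polynomial R ⧸ I) ⧸ N) (Ideal.Quotient.mk N) Ideal.Quotient.mk_surjective hkermk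
  -- value of the composite map
  have hval : ∀ σ : Polynomial R,
      (e3 : ((Polynomial R ⧸ I) ⧸ N) →+* R)
        ((Ideal.Quotient.mk N) ((Ideal.Quotient.mk I) σ)) = σ.coeff 0 := by
    intro σ
    have h0 : (Ideal.Quotient.mk N) ((Ideal.Quotient.mk I) σ)
        = DoubleQuot.quotQuotMk I J σ := rfl
    have h1 : e1 (DoubleQuot.quotQuotMk I J σ)
        = Ideal.Quotient.mk J σ := DoubleQuot.quotQuotEquivQuotOfLE_quotQuotMk σ hle
    show e3 ((Ideal.Quotient.mk N) ((Ideal.Quotient.mk I) σ)) = σ.coeff 0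
    rw [h0, he3, RingEquiv.trans_apply, h1, he2, RingEquiv.trans_apply,
      Ideal.quotEquivOfEq_mk]
    show Polynomial.quotientSpanXSubCAlgEquiv (0 : R)
      ((Ideal.Quotient.mk _) σ) = σ.coeff 0
    rw [Polynomial.quotientSpanXSubCAlgEquiv_mk, Polynomial.coeff_zero_eq_eval_zero]
  -- the main chain
  have chain : ∀ σ : Polynomial R,
      IsQuasipolarRing (GenMatrix (Polynomial R ⧸ I) (Ideal.Quotient.mk I σ)) ↔
      IsQuasipolarRing (GenMatrix R (σ.coeff 0)) := by
    intro σ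
    rw [← hval σ]
    exact Aux18.chain_gen N hNpow e3 _
  refine ⟨chain, fun m hm1 hmn => ?_⟩
  rw [chain (Polynomial.X ^ m)]
  have hc : (Polynomial.X ^ m : Polynomial R).coeff 0 = 0 := by
    rw [Polynomial.coeff_X_pow, if_neg (by omega : ¬(0 : ℕ) = m)]
  rw [hc, Aux18.isQuasipolarRing_iff_cond]
  exact Aux18.cond_zero R
end
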